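/- Let N be a sorting network with n levels and m commutators. Then the flip graph G(N) is (m − n(n−1)/2)-regular and connected. -/

import Mathlib

open Finset
open scoped Classical Pointwise

namespace BrickP

/-! ### Networks and pseudoline arrangements

A network with `n` levels (labeled `0,…,n-1` from bottom to top) and `m` commutators
(labeled `0,…,m-1` from left to right) is encoded by a word `N : Fin m → Fin (n-1)`:
the `j`-th commutator joins levels `(N j).1` and `(N j).1 + 1`.
A pseudoline arrangement supported by `N` is encoded by its set `C` of crossings:
the word of adjacent transpositions read at the positions of `C` must be a reduced
expression of the longest element `w₀` of the symmetric group, i.e. its product is `w₀`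
and its length is `n.choose 2`.  The contacts are the commutators not in `C`. -/

/-- The adjacent transposition of `Fin n` exchanging the levels `i` and `i+1`. -/
def adjT (n : ℕ) (i : Fin (n - 1)) : Equiv.Perm (Fin n) :=
  Equiv.swap ⟨i.1, by have := i.2; omega⟩ ⟨i.1 + 1, by have := i.2; omega⟩

/-- The longest element of the symmetric group on `Fin n`: the order-reversing permutation. -/
def w0 (n : ℕ) : Equiv.Perm (Fin n) := Fin.revPerm

/-- `C` is the crossing set of a pseudoline arrangement supported by the network `N`. -/
def IsArr (n : ℕ) {m : ℕ} (N : Fin m → Fin (n - 1)) (C : Finset (Fin m)) : Prop :=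
  C.card = n.choose 2 ∧
    (((List.finRange m).filter (fun j => j ∈ C)).map (fun j => adjT n (N j))).prod = w0 n

instance (n : ℕ) {m : ℕ} (N : Fin m → Fin (n - 1)) : DecidablePred (IsArr n N) := fun C => by
  unfold IsArr; infer_instance

/-- `statePerm n N C t i` is the level occupied by the `i`-th pseudoline of the arrangement
with crossing set `C` after the first `t` commutators of the network `N`. -/
def statePerm (n : ℕ) {m : ℕ} (N : Fin m → Fin (n - 1)) (C : Finset (Fin m)) :
    ℕ → Equiv.Perm (Fin n)
  | 0 => 1
  | t + 1 =>
    (if h : t < m then (if (⟨t, h⟩ : Fin m) ∈ C then adjT n (N ⟨t, h⟩) else 1) else 1) *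
      statePerm n N C t

/-- The `j`-th commutator has another commutator at the same level gap to its right;
the brick of the network associated to `j` is the bounded cell whose left wall is `j`. -/
def IsBrick {n m : ℕ} (N : Fin m → Fin (n - 1)) (j : Fin m) : Prop :=
  ∃ j' : Fin m, j < j' ∧ N j' = N j

instance {n m : ℕ} (N : Fin m → Fin (n - 1)) : DecidablePred (IsBrick N) := fun j => by
  unfold IsBrick; infer_instance

/-- The `i`-th pseudoline of the arrangement `C` passes above the brick with left wall `j`
(equivalently, above the commutator `j`). -/
def Above (n : ℕ) {m : ℕ} (N : Fin m → Fin (n - 1)) (C : Finset (Fin m))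
    (i : Fin n) (j : Fin m) : Prop :=
  (N j).1 < (statePerm n N C (j.1 + 1) i).1

instance (n : ℕ) {m : ℕ} (N : Fin m → Fin (n - 1)) (C : Finset (Fin m)) (i : Fin n) (j : Fin m) :
    Decidable (Above n N C i j) := by unfold Above; infer_instance

/-- The brick vector of an arrangement: its `i`-th coordinate is the number of bricks of the
network lying below the `i`-th pseudoline. -/
noncomputable def brickVector (n : ℕ) {m : ℕ} (N : Fin m → Fin (n - 1)) (C : Finset (Fin m)) :
    Fin n → ℝ :=
  fun i => ((univ.filter (fun j : Fin m => IsBrick N j ∧ Above n N C i j)).card : ℝ)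

/-- The brick polytope of a network: the convex hull of the brick vectors of all pseudoline
arrangements supported by it. -/
noncomputable def brickPolytope (n : ℕ) {m : ℕ} (N : Fin m → Fin (n - 1)) : Set (Fin n → ℝ) :=
  convexHull ℝ {x | ∃ C, IsArr n N C ∧ brickVector n N C = x}

/-! ### The contact graph -/

/-- The source of the arc of the contact graph associated to the contact `j`:
the pseudoline passing above the contact. -/
def arcSrc (n : ℕ) {m : ℕ} (N : Fin m → Fin (n - 1)) (C : Finset (Fin m)) (j : Fin m) : Fin n :=
  (statePerm n N C (j.1 + 1))⁻¹ ⟨(N j).1 + 1, by have := (N j).2; omega⟩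

/-- The target of the arc of the contact graph associated to the contact `j`:
the pseudoline passing below the contact. -/
def arcTgt (n : ℕ) {m : ℕ} (N : Fin m → Fin (n - 1)) (C : Finset (Fin m)) (j : Fin m) : Fin n :=
  (statePerm n N C (j.1 + 1))⁻¹ ⟨(N j).1, by have := (N j).2; omega⟩

/-- The contact graph of an arrangement, as the multiset of its arcs (a directed multigraph
on the vertex set `Fin n`). -/
def contactMG (n : ℕ) {m : ℕ} (N : Fin m → Fin (n - 1)) (C : Finset (Fin m)) :
    Multiset (Fin n × Fin n) :=
  (univ.filter (fun j : Fin m => j ∉ C)).val.map (fun j => (arcSrc n N C j, arcTgt n N C j))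

/-- There is an arc from `a` to `b` in the contact graph of the arrangement `C`. -/
def ArcRel (n : ℕ) {m : ℕ} (N : Fin m → Fin (n - 1)) (C : Finset (Fin m)) (a b : Fin n) : Prop :=
  ∃ j : Fin m, j ∉ C ∧ arcSrc n N C j = a ∧ arcTgt n N C j = b

/-- `a` and `b` lie in the same connected component of the contact graph of `C`. -/
def ConnRel (n : ℕ) {m : ℕ} (N : Fin m → Fin (n - 1)) (C : Finset (Fin m)) (a b : Fin n) : Prop :=
  Relation.ReflTransGen (fun u v => ArcRel n N C u v ∨ ArcRel n N C v u) a b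

/-- A network is irreducible when the contact graphs of all supported arrangements
are connected. -/
def Irreducible (n : ℕ) {m : ℕ} (N : Fin m → Fin (n - 1)) : Prop :=
  ∀ C, IsArr n N C → ∀ a b : Fin n, ConnRel n N C a b

/-- The contact graph of the arrangement `C` is an acyclic directed multigraph. -/
def AcyclicArcs (n : ℕ) {m : ℕ} (N : Fin m → Fin (n - 1)) (C : Finset (Fin m)) : Prop :=
  ∀ a : Fin n, ¬ Relation.TransGen (ArcRel n N C) a a

/-! ### Polyhedral notions -/

/-- Dimension of a subset of `ℝⁿ`: the rank of the direction of its affine span. -/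
noncomputable def dimOf {n : ℕ} (s : Set (Fin n → ℝ)) : ℕ :=
  Module.finrank ℝ (affineSpan ℝ s).direction

/-- The cone positively spanned by a set of vectors. -/
def coneOf {n : ℕ} (S : Set (Fin n → ℝ)) : Set (Fin n → ℝ) :=
  {x | ∃ (k : ℕ) (c : Fin k → ℝ) (v : Fin k → Fin n → ℝ),
      (∀ i, 0 ≤ c i) ∧ (∀ i, v i ∈ S) ∧ x = ∑ i, c i • v i}

/-- Standard scalar product on `Fin n → ℝ`. -/
def dotp {n : ℕ} (u x : Fin n → ℝ) : ℝ := ∑ i, u i * x i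

/-- The face of `P` minimizing the linear form `⟨u, ·⟩`. -/
def minFace {n : ℕ} (P : Set (Fin n → ℝ)) (u : Fin n → ℝ) : Set (Fin n → ℝ) :=
  {x | x ∈ P ∧ ∀ y ∈ P, dotp u x ≤ dotp u y}

/-- `u` is a normal vector of a facet of `P` (facet = face of codimension 1), with the
convention that the facet is the subset of `P` minimizing `⟨u, ·⟩`. -/
def IsFacetNormal {n : ℕ} (P : Set (Fin n → ℝ)) (u : Fin n → ℝ) : Prop :=
  u ≠ 0 ∧ (minFace P u).Nonempty ∧ dimOf (minFace P u) + 1 = dimOf P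

/-- `F` is a nonempty face of dimension `k` of the convex set `P`. -/
def IsKFace {n : ℕ} (P : Set (Fin n → ℝ)) (k : ℕ) (F : Set (Fin n → ℝ)) : Prop :=
  IsExtreme ℝ P F ∧ Convex ℝ F ∧ F.Nonempty ∧ dimOf F = k

/-- The characteristic vector of a subset of coordinates. -/
def charVec {n : ℕ} (V : Finset (Fin n)) : Fin n → ℝ := fun i => if i ∈ V then 1 else 0

/-! ### Directed cuts -/

/-- The arcs of the contact graph of `C` crossing the vertex partition `(Vᶜ, V)`. -/
def cutArcs (n : ℕ) {m : ℕ} (N : Fin m → Fin (n - 1)) (C : Finset (Fin m)) (V : Finset (Fin n)) :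
    Set (Fin n × Fin n) :=
  {p | ArcRel n N C p.1 p.2 ∧ ((p.1 ∈ V ∧ p.2 ∉ V) ∨ (p.1 ∉ V ∧ p.2 ∈ V))}

/-- `(Vᶜ, V)` is a minimal directed cut of the contact graph of `C`, with sink set `V`:
all crossing arcs are directed towards `V` and the set of crossing arcs is
inclusion-minimal among edge cuts. -/
def MinDirCut (n : ℕ) {m : ℕ} (N : Fin m → Fin (n - 1)) (C : Finset (Fin m))
    (V : Finset (Fin n)) : Prop :=
  V.Nonempty ∧ V ≠ univ ∧ (∀ a b, ArcRel n N C a b → ¬(a ∈ V ∧ b ∉ V)) ∧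
    ∀ W : Finset (Fin n), W.Nonempty → W ≠ univ →
      cutArcs n N C W ⊆ cutArcs n N C V → cutArcs n N C W = cutArcs n N C V

/-! ### The simplicial complex `Δ(N)` and the face maps `Φ`, `Ψ` -/

/-- `γ` is a face of the simplicial complex `Δ(N)`: the network obtained by erasing the
commutators of `γ` is still sorting, i.e. some supported arrangement has all of `γ`
among its contacts. -/
def IsFaceOfCplx (n : ℕ) {m : ℕ} (N : Fin m → Fin (n - 1)) (γ : Finset (Fin m)) : Prop :=
  ∃ C, IsArr n N C ∧ Disjoint γ C

/-- `Φ` associates to `X ⊆ ℝⁿ` the set of commutators of `N` which are contacts in all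
supported arrangements whose brick vector lies in `X`. -/
def PhiMap (n : ℕ) {m : ℕ} (N : Fin m → Fin (n - 1)) (X : Set (Fin n → ℝ)) : Set (Fin m) :=
  {j | ∀ C, IsArr n N C → brickVector n N C ∈ X → j ∉ C}

/-- `Ψ` associates to a set `γ` of commutators of `N` the convex hull of the brick vectors
of the arrangements of `Arr(N|γ)`, i.e. whose contacts contain `γ`. -/
noncomputable def PsiMap (n : ℕ) {m : ℕ} (N : Fin m → Fin (n - 1)) (γ : Set (Fin m)) :
    Set (Fin n → ℝ) :=
  convexHull ℝ {x | ∃ C, IsArr n N C ∧ (∀ j ∈ γ, j ∉ C) ∧ brickVector n N C = x}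

/-- Same component relation in the contact graph of `C` with the arcs of `γ` removed. -/
def ConnRelAvoid (n : ℕ) {m : ℕ} (N : Fin m → Fin (n - 1)) (C : Finset (Fin m))
    (γ : Set (Fin m)) (a b : Fin n) : Prop :=
  Relation.ReflTransGen
    (fun u v =>
      (∃ j : Fin m, j ∉ C ∧ j ∉ γ ∧ arcSrc n N C j = u ∧ arcTgt n N C j = v) ∨
      (∃ j : Fin m, j ∉ C ∧ j ∉ γ ∧ arcSrc n N C j = v ∧ arcTgt n N C j = u)) a b

/-- One step of the quotient multigraph `Λ^#/(Λ^#∖γ^#)`: an arc of `γ^#` between the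
components of `a` and `b` in `Λ^#∖γ^#`. -/
def QStep (n : ℕ) {m : ℕ} (N : Fin m → Fin (n - 1)) (C : Finset (Fin m)) (γ : Set (Fin m))
    (a b : Fin n) : Prop :=
  ∃ a' b' : Fin n, ConnRelAvoid n N C γ a a' ∧
    (∃ j : Fin m, j ∉ C ∧ j ∈ γ ∧ arcSrc n N C j = a' ∧ arcTgt n N C j = b') ∧
    ConnRelAvoid n N C γ b' b

/-- A set `γ` of commutators of `N` is `k`-admissible. -/
def KAdmissible (n : ℕ) {m : ℕ} (N : Fin m → Fin (n - 1)) (γ : Set (Fin m)) (k : ℕ) : Prop :=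
  ∃ C, IsArr n N C ∧ (∀ j ∈ γ, j ∉ C) ∧
    {S : Set (Fin n) | ∃ a, S = {b | ConnRelAvoid n N C γ a b}}.ncard = n - k ∧
    ∀ a, ¬ Relation.TransGen (QStep n N C γ) a a

/-! ### Restrictions of networks -/

/-- The pseudoline of the arrangement `C` entering the commutator `j` from below. -/
def pLow (n : ℕ) {m : ℕ} (N : Fin m → Fin (n - 1)) (C : Finset (Fin m)) (j : Fin m) : Fin n :=
  (statePerm n N C j.1)⁻¹ ⟨(N j).1, by have := (N j).2; omega⟩

/-- The pseudoline of the arrangement `C` entering the commutator `j` from above. -/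
def pHigh (n : ℕ) {m : ℕ} (N : Fin m → Fin (n - 1)) (C : Finset (Fin m)) (j : Fin m) : Fin n :=
  (statePerm n N C j.1)⁻¹ ⟨(N j).1 + 1, by have := (N j).2; omega⟩

/-- `U` is a connected component of the contact graph of the arrangement `C`. -/
def IsComp (n : ℕ) {m : ℕ} (N : Fin m → Fin (n - 1)) (C : Finset (Fin m))
    (U : Finset (Fin n)) : Prop :=
  ∃ a : Fin n, U = univ.filter (fun b => ConnRel n N C a b)

/-- The commutators of `N` whose two incident pseudolines (w.r.t. the arrangement `C`)
both belong to `U`. -/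
def commsIn (n : ℕ) {m : ℕ} (N : Fin m → Fin (n - 1)) (C : Finset (Fin m))
    (U : Finset (Fin n)) : Finset (Fin m) :=
  univ.filter (fun j => pLow n N C j ∈ U ∧ pHigh n N C j ∈ U)

/-- The restriction of the network `N` to the curves of the pseudolines of `U`
(w.r.t. the arrangement `C`): it has `U.card` levels, its commutators are those of
`commsIn n N C U` in left-right order, and the level of such a commutator is the number
of curves of `U` passing below it. -/
noncomputable def restNet (n : ℕ) {m : ℕ} (N : Fin m → Fin (n - 1)) (C : Finset (Fin m))
    (U : Finset (Fin n)) (j' : Fin (commsIn n N C U).card) : Fin (U.card - 1) := by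
  refine ⟨(U.filter (fun u =>
      (statePerm n N C (((commsIn n N C U).orderIsoOfFin rfl j').1).1 u).1 <
        (N ((commsIn n N C U).orderIsoOfFin rfl j').1).1)).card, ?_⟩
  set j : Fin m := ((commsIn n N C U).orderIsoOfFin rfl j').1 with hj
  have hmem : j ∈ commsIn n N C U := ((commsIn n N C U).orderIsoOfFin rfl j').2
  rw [commsIn, Finset.mem_filter] at hmem
  obtain ⟨-, hL, hH⟩ := hmem
  have hlowlvl : (statePerm n N C j.1 (pLow n N C j)).1 = (N j).1 := by
    unfold pLow; rw [Equiv.Perm.inv_def, Equiv.apply_symm_apply]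
  have hhighlvl : (statePerm n N C j.1 (pHigh n N C j)).1 = (N j).1 + 1 := by
    unfold pHigh; rw [Equiv.Perm.inv_def, Equiv.apply_symm_apply]
  have hne : pLow n N C j ≠ pHigh n N C j := by
    intro h; rw [h, hhighlvl] at hlowlvl; omega
  have hsub : U.filter (fun u => (statePerm n N C j.1 u).1 < (N j).1)
      ⊆ (U.erase (pLow n N C j)).erase (pHigh n N C j) := by
    intro u hu
    rw [Finset.mem_filter] at hu
    rw [Finset.mem_erase, Finset.mem_erase]
    refine ⟨fun h => ?_, fun h => ?_, hu.1⟩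
    · rw [h] at hu; omega
    · rw [h] at hu; omega
  have hcard := Finset.card_le_card hsub
  rw [Finset.card_erase_of_mem (Finset.mem_erase.mpr ⟨hne.symm, hH⟩),
    Finset.card_erase_of_mem hL] at hcard
  have hU2 : 2 ≤ U.card := Finset.one_lt_card.mpr ⟨_, hL, _, hH, hne⟩
  omega

/-- The indices, in the restricted network, of the commutators of `γ` belonging to the
restriction. -/
def restIdx (n : ℕ) {m : ℕ} (N : Fin m → Fin (n - 1)) (C : Finset (Fin m)) (U : Finset (Fin n))
    (γ : Finset (Fin m)) : Finset (Fin (commsIn n N C U).card) :=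
  univ.filter (fun j' => ((commsIn n N C U).orderIsoOfFin rfl j').1 ∈ γ)


/-! ### Kernels of networks, alternating networks, and the polygon of a word -/

/-- The commutators of `N` surviving in the `k`-kernel of `N` (obtained by erasing the
first `k` and last `k` levels together with all commutators incident to them). -/
def kernelComms (n : ℕ) {m : ℕ} (N : Fin m → Fin (n - 1)) (k : ℕ) : Finset (Fin m) :=
  univ.filter (fun j => k ≤ (N j).1 ∧ (N j).1 + k < n - 1)

/-- The `k`-kernel of the network `N`: a network with `n - 2k` levels. -/
def kernelNet (n : ℕ) {m : ℕ} (N : Fin m → Fin (n - 1)) (k : ℕ) :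
    Fin (kernelComms n N k).card → Fin (n - 2 * k - 1) :=
  fun j' => ⟨(N ((kernelComms n N k).orderIsoOfFin rfl j').1).1 - k, by
    have h := ((kernelComms n N k).orderIsoOfFin rfl j').2
    have h2 := (Finset.mem_filter.mp h).2
    omega⟩

/-- The commutator `j` is adjacent to the level `ℓ`. -/
def Touches {n m : ℕ} (N : Fin m → Fin (n - 1)) (ℓ : ℕ) (j : Fin m) : Prop :=
  (N j).1 = ℓ ∨ (N j).1 + 1 = ℓ

/-- The network `N` is alternating: the commutators adjacent to each intermediate level are
alternatively located above and below it. -/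
def IsAlternating {n m : ℕ} (N : Fin m → Fin (n - 1)) : Prop :=
  ∀ ℓ : ℕ, 0 < ℓ → ℓ + 1 < n → ∀ j j' : Fin m, j < j' →
    Touches N ℓ j → Touches N ℓ j' → (∀ j'', j < j'' → j'' < j' → ¬ Touches N ℓ j'') →
    N j ≠ N j'

/-- The `i`-th pseudoline of the arrangement `C` touches the level `ℓ` somewhere. -/
def TouchesLevel (n : ℕ) {m : ℕ} (N : Fin m → Fin (n - 1)) (C : Finset (Fin m))
    (i : Fin n) (ℓ : ℕ) : Prop :=
  ∃ t, t ≤ m ∧ (statePerm n N C t i).1 = ℓ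

/-- `M` is the reduced alternating sorting network `N_x` associated to the word
`x ∈ {a,b}^{n-2}` (where `a` is encoded by `true` and `b` by `false`): it is reduced
(it has `n.choose 2` commutators, all of which are crossings of its unique supported
pseudoline arrangement), alternating, and for each `i` its `(i+1)`-st pseudoline touches
the top level if `x i = a` and the bottom level if `x i = b`. -/
def IsNetworkOfWord (n : ℕ) {m : ℕ} (M : Fin m → Fin (n - 1)) (x : Fin (n - 2) → Bool) : Prop :=
  m = n.choose 2 ∧ IsArr n M Finset.univ ∧ IsAlternating M ∧
    ∀ i : Fin (n - 2),
      (x i = true →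
        TouchesLevel n M Finset.univ ⟨i.1 + 1, by have := i.2; omega⟩ (n - 1)) ∧
      (x i = false →
        TouchesLevel n M Finset.univ ⟨i.1 + 1, by have := i.2; omega⟩ 0)

/-- The position of the vertex `v` of the polygon `P_x` in the cyclic (counterclockwise)
order along the boundary of `P_x`: first `p_1`, then the vertices below the horizontal
axis from left to right, then `p_n`, then the vertices above the axis from right to left. -/
def cpos (n : ℕ) (x : Fin (n - 2) → Bool) (v : Fin n) : ℕ :=
  if v.1 = 0 then 0
  else if v.1 = n - 1 then (univ.filter (fun i : Fin (n - 2) => x i = false)).card + 1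
  else if h : v.1 = 0 ∨ v.1 = n - 1 then 0
  else if x ⟨v.1 - 1, by have := v.2; omega⟩ = false then
    (univ.filter (fun i : Fin (n - 2) => i.1 < v.1 - 1 ∧ x i = false)).card + 1
  else
    (univ.filter (fun i : Fin (n - 2) => x i = false)).card + 2 +
      (univ.filter (fun i : Fin (n - 2) => v.1 - 1 < i.1 ∧ x i = true)).card

/-- `c` lies strictly between `a` and `b`. -/
def Btw (a b c : ℕ) : Prop := min a b < c ∧ c < max a b

/-- The diagonals `d` and `e` of the polygon `P_x` cross (in their interior): exactly one
endpoint of `e` lies on each side of `d`. -/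
def CrossesIn (n : ℕ) (x : Fin (n - 2) → Bool) (d e : Fin n × Fin n) : Prop :=
  (Btw (cpos n x d.1) (cpos n x d.2) (cpos n x e.1) ∧
      ¬ Btw (cpos n x d.1) (cpos n x d.2) (cpos n x e.2)) ∨
  (¬ Btw (cpos n x d.1) (cpos n x d.2) (cpos n x e.1) ∧
      Btw (cpos n x d.1) (cpos n x d.2) (cpos n x e.2))

/-- `d` is an internal diagonal of the polygon `P_x`: its endpoints are distinct and
non-consecutive on the boundary. -/
def IsInternal (n : ℕ) (x : Fin (n - 2) → Bool) (d : Fin n × Fin n) : Prop :=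
  d.1 ≠ d.2 ∧ (cpos n x d.1 + 1) % n ≠ cpos n x d.2 ∧ (cpos n x d.2 + 1) % n ≠ cpos n x d.1

/-- The label of the commutator `j` of a reduced network: the pair of indices of the two
pseudolines of the unique supported arrangement which cross at `j` (smallest first). -/
def commLabel (n : ℕ) {m : ℕ} (M : Fin m → Fin (n - 1)) (j : Fin m) : Fin n × Fin n :=
  (pLow n M Finset.univ j, pHigh n M Finset.univ j)

/-! ### Multitriangulations: valid sequences and the sets `D(σ)` -/

/-- The sequence `0^k σ 0^k ∈ {0,1}^n` obtained by appending `k` zeros before and after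
`σ ∈ {0,1}^(n-2k)` (`1` is encoded by `true` and `0` by `false`). -/
def extSeq (n k : ℕ) (σ : Fin (n - 2 * k) → Bool) (t : Fin n) : Bool :=
  if h : k ≤ t.1 ∧ t.1 < k + (n - 2 * k) then σ ⟨t.1 - k, by omega⟩ else false

/-- The positions of the zeros of the extended sequence `0^k σ 0^k`. -/
def zeroSet (n k : ℕ) (σ : Fin (n - 2 * k) → Bool) : Finset (Fin n) :=
  univ.filter (fun t => extSeq n k σ t = false)

/-- The set `D(σ)` of edges `[ζ_i(σ), ζ_{i+k}(σ)]` of the `n`-gon, where `ζ_i(σ)` denotes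
the position of the `i`-th zero of `0^k σ 0^k`. -/
def DsetP (n k : ℕ) (σ : Fin (n - 2 * k) → Bool) (p : Fin n × Fin n) : Prop :=
  ∃ i : Fin (zeroSet n k σ).card, ∃ hik : i.1 + k < (zeroSet n k σ).card,
    p = (((zeroSet n k σ).orderIsoOfFin rfl i).1,
         ((zeroSet n k σ).orderIsoOfFin rfl ⟨i.1 + k, hik⟩).1)

/-- A sequence of `{0,1}^q` is `k`-valid if it is neither `0^q` nor `1^q` and contains no
factor `1 0^r 1` with `r ≥ k`. -/
def KValid (q k : ℕ) (σ : Fin q → Bool) : Prop :=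
  (∃ i, σ i = true) ∧ (∃ i, σ i = false) ∧
    ¬ ∃ i j : Fin q, i < j ∧ σ i = true ∧ σ j = true ∧
        (∀ t, i < t → t < j → σ t = false) ∧ k ≤ j.1 - i.1 - 1

/-! ### The simplicial complex `Δ_n^k` of multitriangulations -/

/-- `p` encodes a `k`-relevant diagonal of a convex `q`-gon with vertices `0,…,q-1` in
cyclic order: it has at least `k` vertices of the polygon (strictly) on each side. -/
def IsRelevantDiag (q k : ℕ) (p : Fin q × Fin q) : Prop :=
  p.1.1 < p.2.1 ∧ p.1.1 + k + 1 ≤ p.2.1 ∧ k + p.2.1 + 1 ≤ q + p.1.1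

/-- Two diagonals of the convex `q`-gon cross. -/
def DiagCross {q : ℕ} (p e : Fin q × Fin q) : Prop :=
  (p.1.1 < e.1.1 ∧ e.1.1 < p.2.1 ∧ p.2.1 < e.2.1) ∨
  (e.1.1 < p.1.1 ∧ p.1.1 < e.2.1 ∧ e.2.1 < p.2.1)

/-- `γ` is a face of the simplicial complex `Δ_q^k`: a `(k+1)`-crossing-free set of
`k`-relevant diagonals of the convex `q`-gon. -/
def IsFaceDelta (q k : ℕ) (γ : Finset (Fin q × Fin q)) : Prop :=
  (∀ p ∈ γ, IsRelevantDiag q k p) ∧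
    ∀ S ⊆ γ, S.card = k + 1 → ¬ (∀ p ∈ S, ∀ e ∈ S, p ≠ e → DiagCross p e)


/-- The flip graph of the network `N`: its vertices are the pseudoline arrangements
supported by `N` and its edges are the flips (two arrangements related by a flip have
crossing sets, equivalently contact sets, differing in exactly one element each). -/
def flipGraph (n : ℕ) {m : ℕ} (N : Fin m → Fin (n - 1)) :
    SimpleGraph {C : Finset (Fin m) // IsArr n N C} where
  Adj C C' := (symmDiff C.1 C'.1).card = 2
  symm := ⟨fun C C' h => by
    show (symmDiff C'.1 C.1).card = 2; rw [symmDiff_comm]; exact h⟩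
  loopless := ⟨fun C h => by simp [symmDiff_self] at h⟩

instance (n : ℕ) {m : ℕ} (N : Fin m → Fin (n - 1)) : DecidableRel (flipGraph n N).Adj :=
  fun C C' => inferInstanceAs (Decidable ((symmDiff C.1 C'.1).card = 2))
/-! ### Auxiliary development for Statement 0 -/

section Statement0

/-- The permutation applied at time `t` in the wiring diagram of `C`. -/
private def letter (n : ℕ) {m : ℕ} (N : Fin m → Fin (n - 1)) (C : Finset (Fin m)) (t : ℕ) :
    Equiv.Perm (Fin n) :=
  if h : t < m then (if (⟨t, h⟩ : Fin m) ∈ C then adjT n (N ⟨t, h⟩) else 1) else 1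

variable (n : ℕ) {m : ℕ} (N : Fin m → Fin (n - 1))

private lemma statePerm_succ (C : Finset (Fin m)) (t : ℕ) :
    statePerm n N C (t + 1) = letter n N C t * statePerm n N C t := rfl

private lemma adjT_inv (i : Fin (n - 1)) : (adjT n i)⁻¹ = adjT n i := by
  unfold adjT; exact Equiv.swap_inv _ _

private lemma letter_inv (C : Finset (Fin m)) (t : ℕ) :
    (letter n N C t)⁻¹ = letter n N C t := by
  unfold letter
  split_ifs with h1 h2
  · exact adjT_inv n _
  · exact inv_one
  · exact inv_one

private lemma statePerm_eq_prod (C : Finset (Fin m)) (T : ℕ) :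
    statePerm n N C T = (((List.range T).map (letter n N C)).reverse).prod := by
  induction T with
  | zero => rfl
  | succ t ih =>
      rw [statePerm_succ, ih, List.range_succ, List.map_append, List.reverse_append]
      simp

private lemma prod_if_filter (C : Finset (Fin m)) (l : List (Fin m)) :
    (l.map (fun j => letter n N C j.1)).prod =
      ((l.filter (fun j => j ∈ C)).map (fun j => adjT n (N j))).prod := by
  induction l with
  | nil => rfl
  | cons a l ih =>
      have ha : letter n N C a.1 = if a ∈ C then adjT n (N a) else 1 := by
        unfold letter; rw [dif_pos a.2]
      by_cases h : a ∈ C <;> simp [List.filter_cons, h, ha, ih]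

private lemma statePerm_last (C : Finset (Fin m)) :
    statePerm n N C m =
      ((((List.finRange m).filter (fun j => j ∈ C)).map (fun j => adjT n (N j))).prod)⁻¹ := by
  have h1 : ((List.range m).map (letter n N C)).prod =
      (((List.finRange m).filter (fun j => j ∈ C)).map (fun j => adjT n (N j))).prod := by
    rw [← prod_if_filter n N C (List.finRange m), ← List.map_coe_finRange_eq_range (n := m), List.map_map]
    rfl
  rw [statePerm_eq_prod, List.prod_reverse_noncomm, ← h1]
  congr 1
  rw [List.map_map]
  congr 1
  apply List.map_congr_left
  intro t _
  exact letter_inv n N C t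

private lemma w0_inv : (w0 n)⁻¹ = w0 n := by
  have h : w0 n * w0 n = 1 := by
    ext x
    simp [w0, Fin.rev_rev]
  exact inv_eq_of_mul_eq_one_right h

private lemma isArr_iff (C : Finset (Fin m)) :
    IsArr n N C ↔ C.card = n.choose 2 ∧ statePerm n N C m = w0 n := by
  unfold IsArr
  rw [statePerm_last n N C, inv_eq_iff_eq_inv, w0_inv]

private lemma statePerm_w0 (C : Finset (Fin m)) (hC : IsArr n N C) :
    statePerm n N C m = w0 n := ((isArr_iff n N C).1 hC).2

private lemma adjT_apply_val (i : Fin (n - 1)) (x : Fin n) :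
    ((adjT n i) x).1 = if x.1 = i.1 then i.1 + 1 else if x.1 = i.1 + 1 then i.1 else x.1 := by
  unfold adjT
  rw [Equiv.swap_apply_def]
  split_ifs with h1 h2 h3 h4 h5 <;>
    simp_all [Fin.ext_iff] <;> omega

/-- The two pseudolines `a` and `b` of the arrangement `C` meet at the commutator `t`,
which is a crossing of `C`. -/
private def MeetsAt (C : Finset (Fin m)) (a b : Fin n) (t : Fin m) : Prop :=
  t ∈ C ∧
    (((statePerm n N C t.1 a).1 = (N t).1 ∧ (statePerm n N C t.1 b).1 = (N t).1 + 1) ∨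
     ((statePerm n N C t.1 a).1 = (N t).1 + 1 ∧ (statePerm n N C t.1 b).1 = (N t).1))

private lemma orient_step (C : Finset (Fin m)) (a b : Fin n) (t : Fin m)
    (hm : ¬ MeetsAt n N C a b t) :
    ((statePerm n N C (t.1 + 1) a).1 < (statePerm n N C (t.1 + 1) b).1 ↔
      (statePerm n N C t.1 a).1 < (statePerm n N C t.1 b).1) := by
  rw [statePerm_succ]
  by_cases hc : t ∈ C
  · have hl : letter n N C t.1 = adjT n (N t) := by
      unfold letter; rw [dif_pos t.2]; simp [hc]
    unfold MeetsAt at hm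
    simp only [hc, true_and] at hm
    rw [hl, Equiv.Perm.mul_apply, Equiv.Perm.mul_apply, adjT_apply_val, adjT_apply_val]
    split_ifs <;> omega
  · have hl : letter n N C t.1 = 1 := by
      unfold letter; rw [dif_pos t.2]; simp [hc]
    simp [hl]

private lemma orient_run (C : Finset (Fin m)) (a b : Fin n) (T : ℕ) (hT : T ≤ m)
    (h : ∀ t : Fin m, t.1 < T → ¬ MeetsAt n N C a b t) :
    ((statePerm n N C T a).1 < (statePerm n N C T b).1 ↔ a.1 < b.1) := by
  induction T with
  | zero => simp [statePerm]
  | succ T ih =>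
      have hTm : T < m := hT
      rw [orient_step n N C a b ⟨T, hTm⟩ (h ⟨T, hTm⟩ (Nat.lt_succ_self T))]
      exact ih (le_of_lt hTm) (fun t ht => h t (by omega))

private lemma exists_meet (C : Finset (Fin m)) (hC : IsArr n N C) (a b : Fin n)
    (hab : a.1 < b.1) : ∃ t : Fin m, MeetsAt n N C a b t := by
  by_contra hcon
  push_neg at hcon
  have h := orient_run n N C a b m le_rfl (fun t _ => hcon t)
  rw [statePerm_w0 n N C hC] at h
  have ha : (w0 n a).1 = n - (a.1 + 1) := Fin.val_rev _
  have hb' : (w0 n b).1 = n - (b.1 + 1) := Fin.val_rev _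
  have hb := b.2
  rw [ha, hb'] at h
  omega

private lemma meetsAt_iff (C : Finset (Fin m)) (a b : Fin n) (t : Fin m) :
    MeetsAt n N C a b t ↔ t ∈ C ∧
      ((a = pLow n N C t ∧ b = pHigh n N C t) ∨ (a = pHigh n N C t ∧ b = pLow n N C t)) := by
  have hlo : ∀ x : Fin n, ((statePerm n N C t.1 x).1 = (N t).1 ↔ x = pLow n N C t) := by
    intro x
    constructor
    · intro h
      unfold pLow
      rw [Equiv.Perm.eq_inv_iff_eq]
      exact Fin.ext h
    · intro h
      rw [h]; unfold pLow; rw [Equiv.Perm.inv_def, Equiv.apply_symm_apply]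
  have hhi : ∀ x : Fin n, ((statePerm n N C t.1 x).1 = (N t).1 + 1 ↔ x = pHigh n N C t) := by
    intro x
    constructor
    · intro h
      unfold pHigh
      rw [Equiv.Perm.eq_inv_iff_eq]
      exact Fin.ext h
    · intro h
      rw [h]; unfold pHigh; rw [Equiv.Perm.inv_def, Equiv.apply_symm_apply]
  unfold MeetsAt
  rw [hlo a, hhi b, hhi a, hlo b]

private lemma pLow_ne_pHigh (C : Finset (Fin m)) (t : Fin m) :
    pLow n N C t ≠ pHigh n N C t := by
  intro h
  have h1 : (statePerm n N C t.1 (pLow n N C t)).1 = (N t).1 := by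
    unfold pLow; rw [Equiv.Perm.inv_def, Equiv.apply_symm_apply]
  have h2 : (statePerm n N C t.1 (pHigh n N C t)).1 = (N t).1 + 1 := by
    unfold pHigh; rw [Equiv.Perm.inv_def, Equiv.apply_symm_apply]
  rw [h] at h1
  omega

/-- The set of increasing pairs of `Fin n`. -/
private def pairsF (n : ℕ) : Finset (Fin n × Fin n) :=
  Finset.univ.filter (fun p => p.1.1 < p.2.1)

private lemma card_pairsF : (pairsF n).card = n.choose 2 := by
  rw [Finset.card_eq_sum_card_fiberwise
      (f := Prod.snd) (t := Finset.univ) (fun p _ => Finset.mem_univ _)]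
  have hfib : ∀ y : Fin n, ((pairsF n).filter (fun p => p.2 = y)).card = y.1 := by
    intro y
    have hmap : (pairsF n).filter (fun p => p.2 = y) =
        (Finset.Iio y).map ⟨fun x => (x, y), fun a b h => (Prod.ext_iff.1 h).1⟩ := by
      ext p
      simp only [pairsF, Finset.mem_filter, Finset.mem_univ, true_and, Finset.mem_map,
        Finset.mem_Iio, Function.Embedding.coeFn_mk]
      constructor
      · rintro ⟨h1, h2⟩
        refine ⟨p.1, ?_, ?_⟩
        · rw [Fin.lt_def, ← h2]; exact h1
        · exact Prod.ext_iff.2 ⟨rfl, h2.symm⟩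
      · rintro ⟨x, hx, rfl⟩
        exact ⟨Fin.lt_def.1 hx, rfl⟩
    rw [hmap, Finset.card_map, Fin.card_Iio]
  rw [Finset.sum_congr rfl (fun y _ => hfib y)]
  rw [Fin.sum_univ_eq_sum_range (fun i => i) n]
  have h2 := Finset.sum_range_id_mul_two n
  rw [Nat.choose_two_right, ← h2, Nat.mul_div_cancel _ (by norm_num)]

/-- The (sorted) pair of pseudolines entering the commutator `j`. -/
private def spF (C : Finset (Fin m)) (j : Fin m) : Fin n × Fin n :=
  if (pLow n N C j).1 < (pHigh n N C j).1 then (pLow n N C j, pHigh n N C j)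
  else (pHigh n N C j, pLow n N C j)

private lemma spF_mem (C : Finset (Fin m)) (j : Fin m) : spF n N C j ∈ pairsF n := by
  have hne : (pLow n N C j).1 ≠ (pHigh n N C j).1 :=
    fun h => pLow_ne_pHigh n N C j (Fin.ext h)
  unfold spF pairsF
  split_ifs with h
  · simp only [Finset.mem_filter, Finset.mem_univ, true_and]; exact h
  · simp only [Finset.mem_filter, Finset.mem_univ, true_and]; omega

private lemma meets_spF (C : Finset (Fin m)) (a b : Fin n) (hab : a.1 < b.1) (t : Fin m)
    (h : MeetsAt n N C a b t) : spF n N C t = (a, b) := by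
  rw [meetsAt_iff] at h
  rcases h.2 with ⟨h1, h2⟩ | ⟨h1, h2⟩
  · unfold spF; rw [← h1, ← h2, if_pos hab]
  · unfold spF; rw [← h1, ← h2, if_neg (by omega)]

private lemma cross_exists_unique (C : Finset (Fin m)) (hC : IsArr n N C) (a b : Fin n)
    (hab : a.1 < b.1) : ∃! t : Fin m, MeetsAt n N C a b t := by
  obtain ⟨t0, ht0⟩ := exists_meet n N C hC a b hab
  have hsurj : ∀ p ∈ pairsF n, ∃ j, ∃ hj : j ∈ C, spF n N C j = p := by
    intro p hp
    have hp2 : p.1.1 < p.2.1 := (Finset.mem_filter.1 hp).2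
    obtain ⟨j, hj⟩ := exists_meet n N C hC p.1 p.2 hp2
    exact ⟨j, hj.1, by rw [meets_spF n N C p.1 p.2 hp2 j hj]⟩
  have hinj := Finset.inj_on_of_surj_on_of_card_le (s := C) (t := pairsF n)
      (fun j _ => spF n N C j) (fun j _ => spF_mem n N C j) hsurj
      (by rw [hC.1, card_pairsF])
  refine ⟨t0, ht0, fun t ht => ?_⟩
  exact hinj ht.1 ht0.1
    ((meets_spF n N C a b hab t ht).trans (meets_spF n N C a b hab t0 ht0).symm)

private lemma meetsAt_symm (C : Finset (Fin m)) (a b : Fin n) (t : Fin m) :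
    MeetsAt n N C a b t ↔ MeetsAt n N C b a t := by
  unfold MeetsAt; tauto

private lemma cross_exists_unique' (C : Finset (Fin m)) (hC : IsArr n N C) (a b : Fin n)
    (hab : a ≠ b) : ∃! t : Fin m, MeetsAt n N C a b t := by
  have hne : a.1 ≠ b.1 := fun h => hab (Fin.ext h)
  rcases lt_or_gt_of_ne hne with h | h
  · exact cross_exists_unique n N C hC a b h
  · obtain ⟨t, ht, hu⟩ := cross_exists_unique n N C hC b a h
    exact ⟨t, (meetsAt_symm n N C a b t).2 ht,
      fun t' ht' => hu t' ((meetsAt_symm n N C a b t').1 ht')⟩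

private lemma state_eq_of_letter_eq (C C' : Finset (Fin m)) (T : ℕ)
    (h : ∀ t, t < T → letter n N C t = letter n N C' t) :
    statePerm n N C T = statePerm n N C' T := by
  induction T with
  | zero => rfl
  | succ T ih =>
      rw [statePerm_succ, statePerm_succ, h T (by omega), ih (fun t ht => h t (by omega))]

private lemma quot_eq_of_letter_eq (C C' : Finset (Fin m)) (T M : ℕ) (hTM : T ≤ M)
    (h : ∀ t, T ≤ t → t < M → letter n N C t = letter n N C' t) :
    (statePerm n N C M)⁻¹ * statePerm n N C' M =
      (statePerm n N C T)⁻¹ * statePerm n N C' T := by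
  induction M, hTM using Nat.le_induction with
  | base => rfl
  | succ M hM ih =>
      rw [statePerm_succ, statePerm_succ, ← h M hM (by omega), mul_inv_rev, mul_assoc,
        inv_mul_cancel_left]
      exact ih (fun t h1 h2 => h t h1 (by omega))

private lemma letter_congr (C C' : Finset (Fin m)) (t : ℕ)
    (h : ∀ ht : t < m, ((⟨t, ht⟩ : Fin m) ∈ C ↔ (⟨t, ht⟩ : Fin m) ∈ C')) :
    letter n N C t = letter n N C' t := by
  unfold letter
  by_cases h1 : t < m
  · rw [dif_pos h1, dif_pos h1, if_congr (h h1) rfl rfl]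
  · rw [dif_neg h1, dif_neg h1]

private lemma state_eq_of_agree (C C' : Finset (Fin m)) (T : ℕ)
    (h : ∀ t : Fin m, t.1 < T → (t ∈ C ↔ t ∈ C')) :
    statePerm n N C T = statePerm n N C' T :=
  state_eq_of_letter_eq n N C C' T (fun t ht => letter_congr n N C C' t (fun htm => h ⟨t, htm⟩ ht))

private lemma sigma_eq (C : Finset (Fin m)) (t : Fin m) :
    (statePerm n N C t.1)⁻¹ * adjT n (N t) * statePerm n N C t.1 =
      Equiv.swap (pLow n N C t) (pHigh n N C t) := by
  unfold pLow pHigh adjT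
  rw [Equiv.swap_apply_apply, inv_inv]

private lemma flip_state (C : Finset (Fin m)) (v w : Fin m) (hv : v ∉ C) (hw : w ∈ C) :
    statePerm n N (insert v (C.erase w)) m =
      statePerm n N C m * Equiv.swap (pLow n N C w) (pHigh n N C w) *
        Equiv.swap (pLow n N C v) (pHigh n N C v) ∨
    statePerm n N (insert v (C.erase w)) m =
      statePerm n N C m * Equiv.swap (pLow n N C v) (pHigh n N C v) *
        Equiv.swap (pLow n N C w) (pHigh n N C w) := by
  set C' := insert v (C.erase w) with hC'def
  have hvw : v ≠ w := fun h => hv (h ▸ hw)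
  have hvC' : v ∈ C' := Finset.mem_insert_self _ _
  have hwC' : w ∉ C' := by
    simp only [hC'def, Finset.mem_insert, Finset.mem_erase]
    push_neg
    exact ⟨hvw.symm, fun h => absurd rfl h⟩
  have hletter : ∀ t : ℕ, t ≠ v.1 → t ≠ w.1 → letter n N C t = letter n N C' t := by
    intro t h1 h2
    apply letter_congr
    intro ht
    have hne1 : (⟨t, ht⟩ : Fin m) ≠ v := fun he => h1 (congrArg Fin.val he)
    have hne2 : (⟨t, ht⟩ : Fin m) ≠ w := fun he => h2 (congrArg Fin.val he)
    simp [hC'def, Finset.mem_insert, Finset.mem_erase, hne1, hne2]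
  have hletter_v' : letter n N C' v.1 = adjT n (N v) := by
    unfold letter; rw [dif_pos v.2]; simp [hvC']
  have hletter_v : letter n N C v.1 = 1 := by
    unfold letter; rw [dif_pos v.2]; simp [hv]
  have hletter_w' : letter n N C' w.1 = 1 := by
    unfold letter; rw [dif_pos w.2]; simp [hwC']
  have hletter_w : letter n N C w.1 = adjT n (N w) := by
    unfold letter; rw [dif_pos w.2]; simp [hw]
  have hvalne : v.1 ≠ w.1 := fun h => hvw (Fin.ext h)
  rcases lt_or_gt_of_ne hvalne with hlt | hgt
  · -- v < w : result is w0 * σ_w * σ_v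
    left
    have h0 : statePerm n N C v.1 = statePerm n N C' v.1 :=
      state_eq_of_letter_eq n N C C' v.1 (fun t ht => hletter t (by omega) (by omega))
    have h1 : (statePerm n N C (v.1 + 1))⁻¹ * statePerm n N C' (v.1 + 1) =
        Equiv.swap (pLow n N C v) (pHigh n N C v) := by
      rw [statePerm_succ, statePerm_succ, hletter_v', hletter_v, one_mul, ← h0,
        ← mul_assoc]
      exact sigma_eq n N C v
    have h2 : (statePerm n N C w.1)⁻¹ * statePerm n N C' w.1 =
        Equiv.swap (pLow n N C v) (pHigh n N C v) :=
      (quot_eq_of_letter_eq n N C C' (v.1 + 1) w.1 (by omega)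
        (fun t ha hb => hletter t (by omega) (by omega))).trans h1
    have h3 : (statePerm n N C (w.1 + 1))⁻¹ * statePerm n N C' (w.1 + 1) =
        Equiv.swap (pLow n N C w) (pHigh n N C w) *
          Equiv.swap (pLow n N C v) (pHigh n N C v) := by
      have hw' : statePerm n N C' w.1 =
          statePerm n N C w.1 * Equiv.swap (pLow n N C v) (pHigh n N C v) := by
        rw [← h2, mul_inv_cancel_left]
      rw [statePerm_succ, statePerm_succ, hletter_w', hletter_w, one_mul, hw',
        mul_inv_rev, adjT_inv, ← sigma_eq n N C w]
      group
    have h4 : (statePerm n N C m)⁻¹ * statePerm n N C' m =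
        Equiv.swap (pLow n N C w) (pHigh n N C w) *
          Equiv.swap (pLow n N C v) (pHigh n N C v) :=
      (quot_eq_of_letter_eq n N C C' (w.1 + 1) m (w.2)
        (fun t ha hb => hletter t (by omega) (by omega))).trans h3
    rw [mul_assoc, ← h4, mul_inv_cancel_left]
  · -- w < v : result is statePerm C m * σ_v * σ_w
    right
    have h0 : statePerm n N C w.1 = statePerm n N C' w.1 :=
      state_eq_of_letter_eq n N C C' w.1 (fun t ht => hletter t (by omega) (by omega))
    have h1 : (statePerm n N C (w.1 + 1))⁻¹ * statePerm n N C' (w.1 + 1) =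
        Equiv.swap (pLow n N C w) (pHigh n N C w) := by
      rw [statePerm_succ, statePerm_succ, hletter_w', hletter_w, one_mul, ← h0,
        mul_inv_rev, adjT_inv]
      exact sigma_eq n N C w
    have h2 : (statePerm n N C v.1)⁻¹ * statePerm n N C' v.1 =
        Equiv.swap (pLow n N C w) (pHigh n N C w) :=
      (quot_eq_of_letter_eq n N C C' (w.1 + 1) v.1 (by omega)
        (fun t ha hb => hletter t (by omega) (by omega))).trans h1
    have h3 : (statePerm n N C (v.1 + 1))⁻¹ * statePerm n N C' (v.1 + 1) =
        Equiv.swap (pLow n N C v) (pHigh n N C v) *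
          Equiv.swap (pLow n N C w) (pHigh n N C w) := by
      have hv' : statePerm n N C' v.1 =
          statePerm n N C v.1 * Equiv.swap (pLow n N C w) (pHigh n N C w) := by
        rw [← h2, mul_inv_cancel_left]
      rw [statePerm_succ, statePerm_succ, hletter_v', hletter_v, one_mul, hv',
        ← sigma_eq n N C v]
      group
    have h4 : (statePerm n N C m)⁻¹ * statePerm n N C' m =
        Equiv.swap (pLow n N C v) (pHigh n N C v) *
          Equiv.swap (pLow n N C w) (pHigh n N C w) :=
      (quot_eq_of_letter_eq n N C C' (v.1 + 1) m (v.2)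
        (fun t ha hb => hletter t (by omega) (by omega))).trans h3
    rw [mul_assoc, ← h4, mul_inv_cancel_left]

private lemma flip_isArr_iff (C : Finset (Fin m)) (hC : IsArr n N C) (v w : Fin m)
    (hv : v ∉ C) (hw : w ∈ C) :
    IsArr n N (insert v (C.erase w)) ↔
      Equiv.swap (pLow n N C v) (pHigh n N C v) =
        Equiv.swap (pLow n N C w) (pHigh n N C w) := by
  have hcard : (insert v (C.erase w)).card = C.card := by
    rw [Finset.card_insert_of_notMem (fun h => hv (Finset.mem_of_mem_erase h)),
      Finset.card_erase_of_mem hw]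
    have : 0 < C.card := Finset.card_pos.2 ⟨w, hw⟩
    omega
  have hbase : IsArr n N (insert v (C.erase w)) ↔
      statePerm n N (insert v (C.erase w)) m = w0 n := by
    rw [isArr_iff, hcard, hC.1]
    simp
  rw [hbase]
  have hm := statePerm_w0 n N C hC
  rcases flip_state n N C v w hv hw with h | h <;> rw [h, hm]
  · constructor
    · intro h2
      have h3 : Equiv.swap (pLow n N C w) (pHigh n N C w) *
          Equiv.swap (pLow n N C v) (pHigh n N C v) = 1 :=
        mul_left_cancel (a := w0 n) (by rw [← mul_assoc, h2, mul_one])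
      have h4 := mul_eq_one_iff_eq_inv.mp h3
      rw [Equiv.swap_inv] at h4
      exact h4.symm
    · intro h2
      rw [h2, mul_assoc, Equiv.swap_mul_self, mul_one]
  · constructor
    · intro h2
      have h3 : Equiv.swap (pLow n N C v) (pHigh n N C v) *
          Equiv.swap (pLow n N C w) (pHigh n N C w) = 1 :=
        mul_left_cancel (a := w0 n) (by rw [← mul_assoc, h2, mul_one])
      have h4 := mul_eq_one_iff_eq_inv.mp h3
      rw [Equiv.swap_inv] at h4
      exact h4
    · intro h2
      rw [h2, mul_assoc, Equiv.swap_mul_self, mul_one]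

private lemma swap_eq_swap_iff {α : Type*} [DecidableEq α] {a b c d : α} (hab : a ≠ b) :
    Equiv.swap a b = Equiv.swap c d ↔ (a = c ∧ b = d) ∨ (a = d ∧ b = c) := by
  constructor
  · intro h
    have h1 : Equiv.swap c d a = b := by rw [← h, Equiv.swap_apply_left]
    rcases eq_or_ne a c with rfl | hac
    · left
      rw [Equiv.swap_apply_left] at h1
      exact ⟨rfl, h1.symm⟩
    rcases eq_or_ne a d with rfl | had
    · right
      rw [Equiv.swap_apply_right] at h1
      exact ⟨rfl, h1.symm⟩
    · rw [Equiv.swap_apply_of_ne_of_ne hac had] at h1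
      exact absurd h1 hab
  · rintro (⟨rfl, rfl⟩ | ⟨rfl, rfl⟩)
    · rfl
    · exact Equiv.swap_comm _ _

/-- The commutator of `C` where the two pseudolines entering the commutator `v` cross. -/
private noncomputable def crossOf (C : Finset (Fin m)) (hC : IsArr n N C) (v : Fin m) : Fin m :=
  (cross_exists_unique' n N C hC (pLow n N C v) (pHigh n N C v)
    (pLow_ne_pHigh n N C v)).exists.choose

private lemma crossOf_spec (C : Finset (Fin m)) (hC : IsArr n N C) (v : Fin m) :
    MeetsAt n N C (pLow n N C v) (pHigh n N C v) (crossOf n N C hC v) :=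
  (cross_exists_unique' n N C hC (pLow n N C v) (pHigh n N C v)
    (pLow_ne_pHigh n N C v)).exists.choose_spec

private lemma crossOf_eq (C : Finset (Fin m)) (hC : IsArr n N C) (v : Fin m) (t : Fin m)
    (ht : MeetsAt n N C (pLow n N C v) (pHigh n N C v) t) : t = crossOf n N C hC v :=
  (cross_exists_unique' n N C hC (pLow n N C v) (pHigh n N C v)
    (pLow_ne_pHigh n N C v)).unique ht (crossOf_spec n N C hC v)

private lemma crossOf_mem (C : Finset (Fin m)) (hC : IsArr n N C) (v : Fin m) :
    crossOf n N C hC v ∈ C := (crossOf_spec n N C hC v).1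

private lemma flip_isArr (C : Finset (Fin m)) (hC : IsArr n N C) (v : Fin m) (hv : v ∉ C) :
    IsArr n N (insert v (C.erase (crossOf n N C hC v))) := by
  rw [flip_isArr_iff n N C hC v _ hv (crossOf_mem n N C hC v)]
  have h := crossOf_spec n N C hC v
  rw [meetsAt_iff] at h
  rcases h.2 with ⟨h1, h2⟩ | ⟨h1, h2⟩
  · rw [h1, h2]
  · rw [h1, h2]
    exact Equiv.swap_comm _ _

private lemma symmDiff_flip {α : Type*} [DecidableEq α] (C : Finset α) (v w : α)
    (hv : v ∉ C) (hw : w ∈ C) : symmDiff C (insert v (C.erase w)) = {v, w} := by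
  have hvw : v ≠ w := fun h => hv (h ▸ hw)
  ext x
  simp only [Finset.mem_symmDiff, Finset.mem_insert, Finset.mem_erase,
    Finset.mem_singleton]
  constructor
  · rintro (⟨hx1, hx2⟩ | ⟨hx1, hx2⟩)
    · push_neg at hx2
      right
      by_contra hxw
      exact (hx2.2 hxw) hx1
    · rcases hx1 with rfl | ⟨hxw, hxC⟩
      · left; rfl
      · exact absurd hxC hx2
  · rintro (rfl | rfl)
    · right
      exact ⟨Or.inl rfl, hv⟩
    · left
      refine ⟨hw, ?_⟩
      push_neg
      exact ⟨hvw.symm, fun h => absurd rfl h⟩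

private lemma adj_decompose (C C' : Finset (Fin m)) (hcard : C.card = C'.card)
    (h : (symmDiff C C').card = 2) :
    ∃ v w, v ∉ C ∧ w ∈ C ∧ C' = insert v (C.erase w) := by
  have hsd : symmDiff C C' = (C \ C') ∪ (C' \ C) := by
    rw [symmDiff_def, Finset.sup_eq_union]
  have hdisj : Disjoint (C \ C') (C' \ C) := disjoint_sdiff_sdiff
  have hcc : (C \ C').card = (C' \ C).card := Finset.card_sdiff_comm hcard
  have hsum : (C \ C').card + (C' \ C).card = 2 := by
    rw [← Finset.card_union_of_disjoint hdisj, ← hsd, h]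
  obtain ⟨w, hww⟩ := Finset.card_eq_one.1 (show (C \ C').card = 1 by omega)
  obtain ⟨v, hvv⟩ := Finset.card_eq_one.1 (show (C' \ C).card = 1 by omega)
  have hvmem : v ∈ C' \ C := hvv ▸ Finset.mem_singleton_self v
  have hwmem : w ∈ C \ C' := hww ▸ Finset.mem_singleton_self w
  rw [Finset.mem_sdiff] at hvmem hwmem
  refine ⟨v, w, hvmem.2, hwmem.1, ?_⟩
  ext x
  simp only [Finset.mem_insert, Finset.mem_erase]
  constructor
  · intro hx
    by_cases hxv : x = v
    · left; exact hxv
    · right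
      have hxC : x ∈ C := by
        by_contra hxC
        have hx2 : x ∈ C' \ C := Finset.mem_sdiff.2 ⟨hx, hxC⟩
        rw [hvv] at hx2
        exact hxv (Finset.mem_singleton.1 hx2)
      refine ⟨fun hxw => ?_, hxC⟩
      subst hxw
      exact hwmem.2 hx
  · rintro (rfl | ⟨hxw, hxC⟩)
    · exact hvmem.1
    · by_contra hxC'
      have hx2 : x ∈ C \ C' := Finset.mem_sdiff.2 ⟨hxC, hxC'⟩
      rw [hww] at hx2
      exact hxw (Finset.mem_singleton.1 hx2)

private lemma degree_eq (C : {C : Finset (Fin m) // IsArr n N C}) :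
    ((flipGraph n N).neighborFinset C).card = m - n.choose 2 := by
  have hcompl : (C.1ᶜ : Finset (Fin m)).card = m - n.choose 2 := by
    rw [Finset.card_compl, C.2.1, Fintype.card_fin]
  rw [← hcompl]
  refine Eq.symm <| Finset.card_bij
    (fun v hv => (⟨insert v (C.1.erase (crossOf n N C.1 C.2 v)),
      flip_isArr n N C.1 C.2 v (Finset.mem_compl.1 hv)⟩ :
      {C : Finset (Fin m) // IsArr n N C})) ?_ ?_ ?_
  · intro v hv
    rw [SimpleGraph.mem_neighborFinset]
    show (symmDiff C.1 _).card = 2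
    have hvC : v ∉ C.1 := Finset.mem_compl.1 hv
    have hwC := crossOf_mem n N C.1 C.2 v
    rw [symmDiff_flip C.1 v _ hvC hwC, Finset.card_pair (fun h => hvC (by rw [h]; exact hwC))]
  · intro v1 hv1 v2 hv2 heq
    have hv1C : v1 ∉ C.1 := Finset.mem_compl.1 hv1
    have heq' := congrArg (fun x => x.1) heq
    simp only at heq'
    have hmem : v1 ∈ insert v2 (C.1.erase (crossOf n N C.1 C.2 v2)) := by
      rw [← heq']
      exact Finset.mem_insert_self _ _
    rcases Finset.mem_insert.1 hmem with h | h
    · exact h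
    · exact absurd (Finset.mem_of_mem_erase h) hv1C
  · intro C' hC'
    rw [SimpleGraph.mem_neighborFinset] at hC'
    have hcards : C.1.card = C'.1.card := by rw [C.2.1, C'.2.1]
    obtain ⟨v, w, hv, hw, hform⟩ := adj_decompose C.1 C'.1 hcards hC'
    have hwv : w = crossOf n N C.1 C.2 v := by
      have harr : IsArr n N (insert v (C.1.erase w)) := hform ▸ C'.2
      rw [flip_isArr_iff n N C.1 C.2 v w hv hw] at harr
      rcases (swap_eq_swap_iff (pLow_ne_pHigh n N C.1 v)).1 harr with ⟨h1, h2⟩ | ⟨h1, h2⟩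
      · exact crossOf_eq n N C.1 C.2 v w
          ((meetsAt_iff n N C.1 _ _ w).2 ⟨hw, Or.inl ⟨h1, h2⟩⟩)
      · exact crossOf_eq n N C.1 C.2 v w
          ((meetsAt_iff n N C.1 _ _ w).2 ⟨hw, Or.inr ⟨h1, h2⟩⟩)
    refine ⟨v, Finset.mem_compl.2 hv, ?_⟩
    apply Subtype.ext
    show insert v ((C.1).erase (crossOf n N C.1 C.2 v)) = C'.1
    rw [← hwv, hform]

private lemma flip_step (C C' : {C : Finset (Fin m) // IsArr n N C}) (t0 : Fin m)
    (hmin : ∀ t : Fin m, t ∈ symmDiff C.1 C'.1 → t0 ≤ t)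
    (ht0' : t0 ∈ C'.1) (ht0 : t0 ∉ C.1) :
    ∃ C₁ : {C : Finset (Fin m) // IsArr n N C},
      (flipGraph n N).Adj C C₁ ∧ ∀ t : Fin m, t ∈ symmDiff C₁.1 C'.1 → t0 < t := by
  set w := crossOf n N C.1 C.2 t0 with hwdef
  have hw : MeetsAt n N C.1 (pLow n N C.1 t0) (pHigh n N C.1 t0) w :=
    crossOf_spec n N C.1 C.2 t0
  have hwC : w ∈ C.1 := hw.1
  have hagree : ∀ t : Fin m, t.1 < t0.1 → (t ∈ C.1 ↔ t ∈ C'.1) := by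
    intro t ht
    by_contra hcon
    have hts : t ∈ symmDiff C.1 C'.1 := by
      rw [Finset.mem_symmDiff]
      tauto
    have := hmin t hts
    rw [Fin.le_def] at this
    omega
  have hwt0 : t0.1 < w.1 := by
    have hwne : w ≠ t0 := fun h => ht0 (h ▸ hwC)
    rcases lt_or_gt_of_ne (fun h : w.1 = t0.1 => hwne (Fin.ext h)) with hlt | hgt
    · exfalso
      have hstate : statePerm n N C.1 w.1 = statePerm n N C'.1 w.1 :=
        state_eq_of_agree n N _ _ w.1 (fun t ht => hagree t (by omega))
      have hstate0 : statePerm n N C.1 t0.1 = statePerm n N C'.1 t0.1 :=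
        state_eq_of_agree n N _ _ t0.1 (fun t ht => hagree t (by omega))
      have hpl : pLow n N C.1 t0 = pLow n N C'.1 t0 := by
        unfold pLow; rw [hstate0]
      have hph : pHigh n N C.1 t0 = pHigh n N C'.1 t0 := by
        unfold pHigh; rw [hstate0]
      have hmw : MeetsAt n N C'.1 (pLow n N C'.1 t0) (pHigh n N C'.1 t0) w := by
        unfold MeetsAt at hw ⊢
        rw [← hstate, ← hpl, ← hph]
        exact ⟨(hagree w hlt).1 hw.1, hw.2⟩
      have hm0 : MeetsAt n N C'.1 (pLow n N C'.1 t0) (pHigh n N C'.1 t0) t0 := by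
        refine ⟨ht0', Or.inl ⟨?_, ?_⟩⟩
        · unfold pLow; rw [Equiv.Perm.inv_def, Equiv.apply_symm_apply]
        · unfold pHigh; rw [Equiv.Perm.inv_def, Equiv.apply_symm_apply]
      have huniq := cross_exists_unique' n N C'.1 C'.2 _ _ (pLow_ne_pHigh n N C'.1 t0)
      have heq : w = t0 := huniq.unique hmw hm0
      exact hwne heq
    · exact hgt
  refine ⟨⟨insert t0 (C.1.erase w), flip_isArr n N C.1 C.2 t0 ht0⟩, ?_, ?_⟩
  · show (symmDiff C.1 _).card = 2
    rw [symmDiff_flip C.1 t0 w ht0 hwC, Finset.card_pair (fun h => ht0 (by rw [h]; exact hwC))]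
  · intro t ht
    rw [Finset.mem_symmDiff] at ht
    rw [Fin.lt_def]
    by_contra hle
    push_neg at hle
    rcases eq_or_lt_of_le hle with heq | hlt
    · have heq2 : t = t0 := Fin.ext heq
      subst heq2
      have h1 : t ∈ insert t (C.1.erase w) := Finset.mem_insert_self _ _
      tauto
    · have htne : t ≠ t0 := fun h => by rw [h] at hlt; omega
      have htnw : t ≠ w := fun h => by rw [h] at hlt; omega
      have hterase : (t ∈ insert t0 (C.1.erase w)) ↔ t ∈ C.1 := by
        simp [Finset.mem_insert, Finset.mem_erase, htne, htnw]
      have hCC' := hagree t hlt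
      tauto

private lemma reach_aux :
    ∀ (k : ℕ) (C C' : {C : Finset (Fin m) // IsArr n N C}),
      (∀ t : Fin m, t ∈ symmDiff C.1 C'.1 → m - t.1 ≤ k) →
      (flipGraph n N).Reachable C C' := by
  intro k
  induction k with
  | zero =>
      intro C C' h
      have hemp : symmDiff C.1 C'.1 = ∅ := by
        by_contra hne
        obtain ⟨t, ht⟩ := Finset.nonempty_iff_ne_empty.2 hne
        have h1 := h t ht
        have h2 := t.2
        omega
      rw [Subtype.ext (Finset.symmDiff_eq_empty.1 hemp)]
  | succ k ih =>
      intro C C' h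
      by_cases hemp : symmDiff C.1 C'.1 = ∅
      · rw [Subtype.ext (Finset.symmDiff_eq_empty.1 hemp)]
      · have hne := Finset.nonempty_iff_ne_empty.2 hemp
        set t0 := (symmDiff C.1 C'.1).min' hne with ht0def
        have ht0mem : t0 ∈ symmDiff C.1 C'.1 := Finset.min'_mem _ hne
        have hmin : ∀ t ∈ symmDiff C.1 C'.1, t0 ≤ t := fun t ht => Finset.min'_le _ t ht
        have hbound := h t0 ht0mem
        rw [Finset.mem_symmDiff] at ht0mem
        have ht0m := t0.2
        rcases ht0mem with ⟨h1, h2⟩ | ⟨h1, h2⟩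
        · -- t0 ∈ C.1, t0 ∉ C'.1 : flip C'
          obtain ⟨C₁, hadj, hgt⟩ := flip_step n N C' C t0
            (fun t ht => hmin t (by rwa [symmDiff_comm] at ht)) h1 h2
          have hreach : (flipGraph n N).Reachable C C₁ := by
            apply ih
            intro t ht
            have := hgt t (by rwa [symmDiff_comm] at ht)
            rw [Fin.lt_def] at this
            omega
          exact hreach.trans hadj.symm.reachable
        · obtain ⟨C₁, hadj, hgt⟩ := flip_step n N C C' t0 hmin h1 h2
          refine hadj.reachable.trans ?_
          apply ih
          intro t ht
          have := hgt t ht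
          rw [Fin.lt_def] at this
          omega

end Statement0

/-- Let `N` be a sorting network with `n` levels and `m` commutators.
Then the flip graph `G(N)` is `(m - n(n-1)/2)`-regular and connected. -/
theorem flipGraph_connected_and_regular (n m : ℕ) (N : Fin m → Fin (n - 1))
    (hsort : ∃ C, IsArr n N C) :
    (flipGraph n N).Connected ∧ (flipGraph n N).IsRegularOfDegree (m - n.choose 2) := by
  constructor
  · rw [SimpleGraph.connected_iff]
    constructor
    · intro C C'
      exact reach_aux n N m C C' (fun t _ => by omega)
    · obtain ⟨C, hC⟩ := hsort
      exact ⟨⟨C, hC⟩⟩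
  · intro C
    exact degree_eq n N C

end BrickP
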